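/- Let T be a finite tree, let e = {u, v} be an edge of T, and let W be a closed walk in T that traverses every dart of T exactly once. Let C_v be the vertex set of the connected component containing v of the graph obtained from T by deleting the edge e, and let s = |C_v|. Then, in the cyclic sequence of darts traversed by W, the darts occurring strictly after the traversal of (u, v) and strictly before the traversal of (v, u) are exactly the darts of T whose both endpoints lie in C_v, and their number is 2(s − 1). -/

import Mathlib

open SimpleGraph

/-- Propagate a vertex-set invariant along a chain of darts. -/
lemma dart_chain_prop {V : Type} (G : SimpleGraph V) (S : Set V)
    (P : G.Dart → Prop)
    (hstep : ∀ d : G.Dart, P d → d.fst ∈ S → d.snd ∈ S) :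
    ∀ (l : List G.Dart) (x : G.Dart), List.Chain G.DartAdj x l → x.snd ∈ S →
      (∀ d ∈ l, P d) → ∀ d ∈ l, d.fst ∈ S ∧ d.snd ∈ S := by
  intro l
  induction l with
  | nil => intro x _ _ _ d hd; cases hd
  | cons y t ih =>
    intro x hc hx hP d hd
    replace hc := List.isChain_cons_cons.mp hc
    have hadj : x.snd = y.fst := hc.1
    have hyfst : y.fst ∈ S := hadj ▸ hx
    have hysnd : y.snd ∈ S := hstep y (hP y List.mem_cons_self) hyfst
    rcases List.mem_cons.mp hd with rfl | hd
    · exact ⟨hyfst, hysnd⟩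
    · exact ih y hc.2 hysnd (fun d hd => hP d (List.mem_cons_of_mem _ hd)) d hd

/-- Let `T` be a tree, `e = {u, v}` an edge of `T`, and `W` a closed walk traversing
every dart of `T` exactly once.  Let `C_v` be the vertex set of the connected component
of `v` after deleting the edge `e`, and `s = |C_v|`.  Then in the cyclic sequence of
darts of `W`, the darts strictly after the traversal of `(u, v)` and strictly before the
traversal of `(v, u)` are exactly the darts with both endpoints in `C_v`, and there are
`2 * (s - 1)` of them. -/
theorem euler_tour_subtree_segment {V : Type} [Fintype V] (G : SimpleGraph V)
    (hT : G.IsTree) (u v : V) (huv : G.Adj u v) (a : V) (w : G.Walk a a)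
    (hnodup : w.darts.Nodup) (hall : ∀ d : G.Dart, d ∈ w.darts) :
    ∃ (n : ℕ) (B C : List G.Dart),
      w.darts.rotate n =
        (⟨(u, v), huv⟩ : G.Dart) :: (B ++ (⟨(v, u), huv.symm⟩ : G.Dart) :: C) ∧
      (∀ d : G.Dart, d ∈ B ↔
        (d.fst ∈ ((G.deleteEdges {s(u, v)}).connectedComponentMk v).supp ∧
         d.snd ∈ ((G.deleteEdges {s(u, v)}).connectedComponentMk v).supp)) ∧
      B.length =
        2 * (Nat.card ((G.deleteEdges {s(u, v)}).connectedComponentMk v).supp - 1) := by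
  classical
  set G' := G.deleteEdges {s(u, v)} with hG'def
  set S : Set V := (G'.connectedComponentMk v).supp with hSdef
  have huvne : u ≠ v := huv.ne
  have hv : v ∈ S := by
    simp [hSdef, ConnectedComponent.mem_supp_iff]
  have hbridge : ¬ G'.Reachable u v := by
    have hb := (isAcyclic_iff_forall_adj_isBridge.mp hT.IsAcyclic) huv
    exact isBridge_iff.mp hb
  have hu : u ∉ S := by
    intro h
    have h2 : G'.connectedComponentMk u = G'.connectedComponentMk v :=
      (ConnectedComponent.mem_supp_iff _ _).mp h
    exact hbridge (ConnectedComponent.exact h2)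
  have hclosed : ∀ x y : V, G'.Adj x y → x ∈ S → y ∈ S := by
    intro x y hxy hx
    have hx' : G'.connectedComponentMk x = G'.connectedComponentMk v :=
      (ConnectedComponent.mem_supp_iff _ _).mp hx
    have h2 : G'.connectedComponentMk y = G'.connectedComponentMk x :=
      ConnectedComponent.sound hxy.symm.reachable
    exact (ConnectedComponent.mem_supp_iff _ _).mpr (h2.trans hx')
  set d₀ : G.Dart := ⟨(u, v), huv⟩ with hd₀def
  set d₁ : G.Dart := ⟨(v, u), huv.symm⟩ with hd₁def
  have hd01 : d₀ ≠ d₁ := by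
    intro h
    exact huvne (congrArg (fun d : G.Dart => d.fst) h)
  -- step lemmas
  have hstepB : ∀ d : G.Dart, d ≠ d₁ → d.fst ∈ S → d.snd ∈ S := by
    intro d hne hfst
    by_cases he : s(d.fst, d.snd) = s(u, v)
    · rcases Sym2.eq_iff.mp he with ⟨h1, h2⟩ | ⟨h1, h2⟩
      · exact absurd hfst (h1 ▸ hu)
      · exact absurd (SimpleGraph.Dart.ext d d₁ (Prod.ext h1 h2)) hne
    · have hadj : G'.Adj d.fst d.snd := by
        rw [hG'def, deleteEdges_adj]
        exact ⟨d.adj, by simpa using he⟩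
      exact hclosed _ _ hadj hfst
  have hstepC : ∀ d : G.Dart, d ≠ d₀ → d.fst ∈ Sᶜ → d.snd ∈ Sᶜ := by
    intro d hne hfst
    by_cases he : s(d.fst, d.snd) = s(u, v)
    · rcases Sym2.eq_iff.mp he with ⟨h1, h2⟩ | ⟨h1, h2⟩
      · exact absurd (SimpleGraph.Dart.ext d d₀ (Prod.ext h1 h2)) hne
      · exact absurd (h1 ▸ hv) hfst
    · have hadj : G'.Adj d.fst d.snd := by
        rw [hG'def, deleteEdges_adj]
        exact ⟨d.adj, by simpa using he⟩
      intro hsnd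
      exact hfst (hclosed _ _ hadj.symm hsnd)
  -- list decomposition
  have hchain : w.darts.Chain' G.DartAdj := w.isChain_dartAdj_darts
  have hd0mem : d₀ ∈ w.darts := hall d₀
  have hlne : w.darts ≠ [] := List.ne_nil_of_mem hd0mem
  obtain ⟨s, t, hl⟩ := List.append_of_mem hd0mem
  have hslen : s.length ≤ w.darts.length := by
    rw [hl]; simp
  have hrot : w.darts.rotate s.length = (d₀ :: t) ++ s := by
    rw [List.rotate_eq_drop_append_take hslen, hl, List.drop_left, List.take_left]
  -- chain on the rotated list
  have hchain_rot : ((d₀ :: t) ++ s).Chain' G.DartAdj := by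
    apply List.isChain_append.mpr
    refine ⟨hchain.suffix ⟨s, hl.symm⟩, hchain.prefix ⟨d₀ :: t, hl.symm⟩, ?_⟩
    intro x hx y hy
    have hsne : s ≠ [] := by
      intro h; rw [h] at hy; simp at hy
    have hx' : x = w.darts.getLast hlne := by
      have h2 : w.darts.getLast? = some x := by
        rw [hl, List.getLast?_append_of_ne_nil _ (List.cons_ne_nil _ _)]
        exact hx
      rw [List.getLast?_eq_getLast_of_ne_nil hlne] at h2
      exact (Option.some_injective _ h2).symm
    have hy' : y = w.darts.head hlne := by
      have h2 : w.darts.head? = some y := by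
        rw [hl, List.head?_append_of_ne_nil _ hsne]
        exact hy
      rw [List.head?_eq_head hlne] at h2
      exact (Option.some_injective _ h2).symm
    show x.snd = y.fst
    rw [hx', hy', w.getLast_darts_eq_lastDart hlne, w.head_darts_eq_firstDart hlne]; rfl
  have hnd_rot : ((d₀ :: t) ++ s).Nodup := by
    rw [← hrot]
    exact List.nodup_rotate.mpr hnodup
  have hd1mem' : d₁ ∈ t ++ s := by
    have h1 : d₁ ∈ (d₀ :: t) ++ s := by rw [← hrot, List.mem_rotate]; exact hall d₁
    have h2 : d₁ ∈ d₀ :: (t ++ s) := by simpa using h1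
    rcases List.mem_cons.mp h2 with h | h
    · exact absurd h.symm hd01
    · exact h
  obtain ⟨B, C, hBC⟩ := List.append_of_mem hd1mem'
  have hrot' : w.darts.rotate s.length = d₀ :: (B ++ d₁ :: C) := by
      rw [hrot, List.cons_append, hBC]
  have hch2 : ((d₀ :: B) ++ (d₁ :: C)).Chain' G.DartAdj := by
    have := hchain_rot
    rw [List.cons_append, hBC] at this
    simpa using this
  obtain ⟨hcB', hcC', -⟩ := List.isChain_append.mp hch2
  have hcB : List.Chain G.DartAdj d₀ B := hcB'
  have hcC : List.Chain G.DartAdj d₁ C := hcC'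
  have hnd2 : (d₀ :: (B ++ d₁ :: C)).Nodup := by
    have := hnd_rot
    rw [List.cons_append, hBC] at this
    exact this
  have hd0head := (List.nodup_cons.mp hnd2).1
  have hndBC : (B ++ d₁ :: C).Nodup := (List.nodup_cons.mp hnd2).2
  have hd0nC : d₀ ∉ C := fun h => hd0head (by simp [h])
  have hd1nB : d₁ ∉ B := fun h =>
    (List.nodup_append.mp hndBC).2.2 _ h _ List.mem_cons_self rfl
  have hndB : B.Nodup := (List.nodup_append.mp hndBC).1
  have hBin : ∀ d ∈ B, d.fst ∈ S ∧ d.snd ∈ S := by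
    apply dart_chain_prop G S (fun d => d ≠ d₁) hstepB B d₀ hcB hv
    intro d hd h
    exact hd1nB (h ▸ hd)
  have hCin : ∀ d ∈ C, d.fst ∈ Sᶜ ∧ d.snd ∈ Sᶜ := by
    apply dart_chain_prop G Sᶜ (fun d => d ≠ d₀) hstepC C d₁ hcC hu
    intro d hd h
    exact hd0nC (h ▸ hd)
  have hBiff : ∀ d : G.Dart, d ∈ B ↔ (d.fst ∈ S ∧ d.snd ∈ S) := by
    intro d
    refine ⟨fun hd => hBin d hd, fun ⟨h1, h2⟩ => ?_⟩
    have hmem : d ∈ d₀ :: (B ++ d₁ :: C) := by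
      rw [← hrot', List.mem_rotate]; exact hall d
    rcases List.mem_cons.mp hmem with rfl | hmem
    · exact absurd h1 hu
    rcases List.mem_append.mp hmem with hmem | hmem
    · exact hmem
    rcases List.mem_cons.mp hmem with rfl | hmem
    · exact absurd h2 hu
    · exact absurd h1 (hCin d hmem).1
  -- counting
  clear hcB hcC hcB' hcC' hch2
  set H : SimpleGraph S := G'.induce S with hHdef
  have hHadj : ∀ {x y : S}, H.Adj x y → G'.Adj (x : V) (y : V) := fun h => h
  have hHlift : ∀ (x y : V) (p : G'.Walk x y) (hx : x ∈ S) (hy : y ∈ S),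
      H.Reachable ⟨x, hx⟩ ⟨y, hy⟩ := by
    intro x y p
    induction p with
    | nil => intro hx hy; exact Reachable.refl _
    | @cons x x' y hadj p ih =>
      intro hx hy
      have hx' : x' ∈ S := hclosed _ _ hadj hx
      have hadj' : H.Adj ⟨x, hx⟩ ⟨x', hx'⟩ := hadj
      exact hadj'.reachable.trans (ih hx' hy)
  have hHconn : H.Connected := by
    haveI : Nonempty ↥S := ⟨⟨v, hv⟩⟩
    refine ⟨fun x y => ?_⟩
    obtain ⟨x, hx⟩ := x
    obtain ⟨y, hy⟩ := y
    have hxy : G'.Reachable x y := ConnectedComponent.exact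
      (((ConnectedComponent.mem_supp_iff _ _).mp hx).trans
        ((ConnectedComponent.mem_supp_iff _ _).mp hy).symm)
    obtain ⟨p⟩ := hxy
    exact hHlift x y p hx hy
  have hfadj : ∀ {x y : S}, H.Adj x y → G.Adj (x : V) (y : V) := by
    intro x y h
    have h' : G'.Adj (x : V) (y : V) := hHadj h
    rw [hG'def, deleteEdges_adj] at h'
    exact h'.1
  let f : H →g G := ⟨Subtype.val, fun h => hfadj h⟩
  have hfinj : Function.Injective (f : S → V) := Subtype.val_injective
  have hHac : H.IsAcyclic := by
    intro x c hc
    exact hT.IsAcyclic (c.map f)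
      ((SimpleGraph.Walk.map_isCycle_iff_of_injective hfinj).mpr hc)
  have hHtree : H.IsTree := ⟨hHconn, hHac⟩
  have hedges : H.edgeFinset.card + 1 = Fintype.card S := hHtree.card_edgeFinset
  have hdarts : Fintype.card H.Dart = 2 * H.edgeFinset.card :=
    H.dart_card_eq_twice_card_edges
  have e : H.Dart ≃ {d : G.Dart // d.fst ∈ S ∧ d.snd ∈ S} :=
    { toFun := fun d => ⟨⟨((d.fst : V), (d.snd : V)), hfadj d.adj⟩, d.fst.2, d.snd.2⟩
      invFun := fun p => ⟨(⟨p.1.fst, p.2.1⟩, ⟨p.1.snd, p.2.2⟩), by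
        show G'.Adj p.1.fst p.1.snd
        rw [hG'def, deleteEdges_adj]
        refine ⟨p.1.adj, ?_⟩
        intro hmem
        rw [Set.mem_singleton_iff] at hmem
        rcases Sym2.eq_iff.mp hmem with ⟨h1, h2⟩ | ⟨h1, h2⟩
        · exact hu (h1 ▸ p.2.1)
        · exact hu (h2 ▸ p.2.2)⟩
      left_inv := fun d => rfl
      right_inv := fun p => rfl }
  have hcard1 : Fintype.card {d : G.Dart // d.fst ∈ S ∧ d.snd ∈ S}
      = Fintype.card H.Dart := (Fintype.card_congr e).symm
  have hBlen : B.length = Fintype.card {d : G.Dart // d.fst ∈ S ∧ d.snd ∈ S} := by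
    rw [Fintype.card_subtype, ← List.toFinset_card_of_nodup hndB]
    congr 1
    ext d
    simp only [List.mem_toFinset, Finset.mem_filter, Finset.mem_univ, true_and]
    exact hBiff d
  have hNS : Nat.card S = Fintype.card S := Nat.card_eq_fintype_card
  refine ⟨s.length, B, C, hrot', hBiff, ?_⟩
  rw [hBlen, hcard1, hdarts, hNS]
  omega
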